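/- Correctness of the Borda-average single-peaked manipulation reduction: let k_1,...,k_t be positive even integers summing to 2K and let K̂ be a positive even integer with K̂ ≤ 2K. Consider 3 candidates {a,p,b} with nonmanipulator scores score(p) = 6K, score(a) = 15K + 3K̂/2, score(b) = 15K − 3K̂/2. Manipulator i has weight 3k_i and casts one of the votes (p>a>b) contributing per unit weight (a:1, b:0, p:2), (p>b>a) contributing (a:0, b:1, p:2), or (p>a∼b) contributing (a:1/2, b:1/2, p:2). Then the manipulators can vote so that p's total score is ≥ the totals of both a and b if and only if there is a partition (A,B,C) of {k_1,...,k_t} with Σ A = Σ B + K̂. -/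
import Mathlib


/-- Correctness of the Borda-average single-peaked manipulation reduction:
`k 1, ..., k t` positive even integers summing to `2K`, `K̂` positive even with
`K̂ ≤ 2K`. Nonmanipulator scores: p: 6K, a: 15K + 3K̂/2, b: 15K − 3K̂/2.
Manipulator `i` has weight `3 * k i` and casts `v i : Fin 3`
(`0` = p>a>b: (a:1, b:0, p:2); `1` = p>b>a: (a:0, b:1, p:2);
`2` = p>a∼b: (a:1/2, b:1/2, p:2)). The manipulators can make p's total score
at least those of a and b iff there is a partition `(A,B,C)` of the `k i`
with `∑ A = ∑ B + K̂`. -/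
theorem borda_average_single_peaked_reduction_correct
    (t K Khat : ℕ) (k : Fin t → ℕ)
    (hk : ∀ i, 0 < k i) (hkeven : ∀ i, Even (k i)) (hsum : ∑ i, k i = 2 * K)
    (hKhat : 0 < Khat) (hKhatEven : Even Khat) (hKhatle : Khat ≤ 2 * K) :
    (∃ v : Fin t → Fin 3,
        (6 * K + ∑ i, (3 * k i : ℚ) * 2 ≥
          (15 * K + 3 * Khat / 2) +
            ∑ i, (3 * k i : ℚ) * (if v i = 0 then 1 else if v i = 1 then 0 else 1/2)) ∧
        (6 * K + ∑ i, (3 * k i : ℚ) * 2 ≥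
          (15 * K - 3 * Khat / 2) +
            ∑ i, (3 * k i : ℚ) * (if v i = 0 then 0 else if v i = 1 then 1 else 1/2))) ↔
      (∃ f : Fin t → Fin 3,
        ∑ i ∈ Finset.univ.filter (fun i => f i = 0), k i =
          (∑ i ∈ Finset.univ.filter (fun i => f i = 1), k i) + Khat) := by
  have hsumQ : (∑ i, (k i : ℚ)) = 2 * K := by exact_mod_cast hsum
  have hcast : ∀ (v : Fin t → Fin 3) (j : Fin 3),
      (∑ i, (if v i = j then (k i : ℚ) else 0))
        = ((∑ i ∈ Finset.univ.filter (fun i => v i = j), k i : ℕ) : ℚ) := by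
    intro v j
    rw [Finset.sum_filter]
    push_cast [apply_ite (Nat.cast : ℕ → ℚ)]
    rfl
  have hsplit : ∀ (v : Fin t → Fin 3) (c0 c1 c2 : ℚ),
      (∑ i, (3 * k i : ℚ) * (if v i = 0 then c0 else if v i = 1 then c1 else c2))
      = 3 * c2 * (∑ i, (k i : ℚ))
        + 3 * (c0 - c2) * (∑ i, (if v i = 0 then (k i : ℚ) else 0))
        + 3 * (c1 - c2) * (∑ i, (if v i = 1 then (k i : ℚ) else 0)) := by
    intro v c0 c1 c2
    simp only [Finset.mul_sum, ← Finset.sum_add_distrib]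
    refine Finset.sum_congr rfl fun i _ => ?_
    by_cases h0 : v i = 0
    · simp only [h0]; norm_num; ring
    · by_cases h1 : v i = 1
      · simp only [h0, h1]; norm_num; ring
      · simp only [h0, h1, if_neg]; norm_num; ring
  have hconst : (∑ i, (3 * k i : ℚ) * 2) = 12 * K := by
    rw [show (∑ i, (3 * k i : ℚ) * 2) = 6 * ∑ i, (k i : ℚ) by
      rw [Finset.mul_sum]; exact Finset.sum_congr rfl fun i _ => by ring]
    rw [hsumQ]; ring
  have key : ∀ v : Fin t → Fin 3,
      ((6 * K + ∑ i, (3 * k i : ℚ) * 2 ≥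
          (15 * K + 3 * Khat / 2) +
            ∑ i, (3 * k i : ℚ) * (if v i = 0 then 1 else if v i = 1 then 0 else 1/2)) ∧
        (6 * K + ∑ i, (3 * k i : ℚ) * 2 ≥
          (15 * K - 3 * Khat / 2) +
            ∑ i, (3 * k i : ℚ) * (if v i = 0 then 0 else if v i = 1 then 1 else 1/2)))
      ↔ (∑ i ∈ Finset.univ.filter (fun i => v i = 1), k i)
          = (∑ i ∈ Finset.univ.filter (fun i => v i = 0), k i) + Khat := by
    intro v
    rw [hconst, hsplit v 1 0 (1/2), hsplit v 0 1 (1/2), hcast v 0, hcast v 1, hsumQ]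
    constructor
    · rintro ⟨h1, h2⟩
      have : ((∑ i ∈ Finset.univ.filter (fun i => v i = 1), k i : ℕ) : ℚ)
          = ((∑ i ∈ Finset.univ.filter (fun i => v i = 0), k i : ℕ) : ℚ) + (Khat : ℚ) := by
        linarith
      exact_mod_cast this
    · intro h
      have h' : ((∑ i ∈ Finset.univ.filter (fun i => v i = 1), k i : ℕ) : ℚ)
          = ((∑ i ∈ Finset.univ.filter (fun i => v i = 0), k i : ℕ) : ℚ) + (Khat : ℚ) := by
        exact_mod_cast h
      constructor <;> linarith
  have hswap : ∀ (g : Fin t → Fin 3) (j₀ j₁ : Fin 3),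
      (∀ x : Fin 3, (![1, 0, 2] : Fin 3 → Fin 3) x = j₀ ↔ x = j₁) →
      Finset.univ.filter (fun i => ((![1, 0, 2] : Fin 3 → Fin 3) ∘ g) i = j₀)
        = Finset.univ.filter (fun i => g i = j₁) := by
    intro g j₀ j₁ h
    exact Finset.filter_congr fun i _ => by simp [Function.comp, h]
  constructor
  · rintro ⟨v, hv⟩
    refine ⟨(![1, 0, 2] : Fin 3 → Fin 3) ∘ v, ?_⟩
    rw [hswap v 0 1 (by decide), hswap v 1 0 (by decide)]
    exact (key v).mp hv
  · rintro ⟨f, hf⟩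
    refine ⟨(![1, 0, 2] : Fin 3 → Fin 3) ∘ f, (key _).mpr ?_⟩
    have e1 : Finset.univ.filter (fun i => ((![1, 0, 2] : Fin 3 → Fin 3) ∘ f) i = 1)
        = Finset.univ.filter (fun i => f i = 0) := hswap f 1 0 (by decide)
    have e0 : Finset.univ.filter (fun i => ((![1, 0, 2] : Fin 3 → Fin 3) ∘ f) i = 0)
        = Finset.univ.filter (fun i => f i = 1) := hswap f 0 1 (by decide)
    rw [e1, e0]
    exact hf
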